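/- The truncation error of the Ising evolution is bounded by the total truncated time weighted by the interaction strength: ½‖e^{−iH} − e^{−iH'}‖ ≤ ¼ Σ_{i≠j} |J_{ij}| · Σ_{m∈C} λ_m, where H = −Σ_{i<j} J_{ij} Σ_m λ_m m_i m_j Z_i Z_j and H' is obtained from H by dropping all terms with m in a set C. -/

import Mathlib

open Matrix NormedSpace

/-- The spectral (ℓ²-operator) norm of a complex matrix, via its action on Euclidean
space. -/
noncomputable def specNorm {m : Type*} [Fintype m] [DecidableEq m]
    (A : Matrix m m ℂ) : ℝ :=
  ‖Matrix.toEuclideanCLM (𝕜 := ℂ) A‖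

/-- The total Ising Hamiltonian `−Σ_{i<j} J_{ij} Σ_{s ∈ S} λ_s m_i m_j Z_i Z_j`
(encodings `m = (-1)^s` indexed by sign vectors `s ∈ S`), as a diagonal matrix in the
computational basis. -/
noncomputable def totalH (n : ℕ) (J : Matrix (Fin n) (Fin n) ℝ)
    (lam : (Fin n → Bool) → ℝ) (S : Finset (Fin n → Bool)) :
    Matrix (Fin n → Bool) (Fin n → Bool) ℂ :=
  Matrix.diagonal fun x =>
    ((-(∑ i : Fin n, ∑ j ∈ Finset.univ.filter (fun j => i < j),
      J i j * ∑ s ∈ S, lam s * (if s i then (-1 : ℝ) else 1) *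
        (if s j then (-1 : ℝ) else 1) *
        (if x i then (-1 : ℝ) else 1) * (if x j then (-1 : ℝ) else 1)) : ℝ) : ℂ)

/-- `|e^{ia} − e^{ib}| ≤ |a − b|` for real `a, b`. -/
lemma norm_exp_I_sub_exp_I_le (a b : ℝ) :
    ‖Complex.exp (a * Complex.I) - Complex.exp (b * Complex.I)‖ ≤ |a - b| := by
  have h1 : Complex.exp (a * Complex.I) - Complex.exp (b * Complex.I)
      = Complex.exp (b * Complex.I) * (Complex.exp (((a - b : ℝ) : ℂ) * Complex.I) - 1) := by
    rw [mul_sub, mul_one, ← Complex.exp_add]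
    push_cast
    ring_nf
  rw [h1, norm_mul, Complex.norm_exp_ofReal_mul_I, one_mul]
  set t : ℝ := a - b with ht
  have h2 : Complex.exp ((t : ℂ) * Complex.I) - 1
      = Complex.ofReal (Real.cos t - 1) + Complex.ofReal (Real.sin t) * Complex.I := by
    rw [Complex.exp_mul_I]
    push_cast
    ring
  have h3 : ‖Complex.exp ((t : ℂ) * Complex.I) - 1‖ ^ 2
      = (Real.cos t - 1) ^ 2 + Real.sin t ^ 2 := by
    rw [h2, Complex.sq_norm, Complex.normSq_apply]
    simp [Complex.cos_ofReal_re, Complex.sin_ofReal_re]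
    ring
  have hs : Real.sin (t / 2) ^ 2 ≤ (t / 2) ^ 2 := by
    have h := Real.abs_sin_le_abs (x := t / 2)
    have h' := mul_self_le_mul_self (abs_nonneg (Real.sin (t / 2))) h
    nlinarith [sq_abs (Real.sin (t / 2)), sq_abs (t / 2)]
  have hcos : Real.cos (t / 2) ^ 2 = 1 / 2 + Real.cos t / 2 := by
    have := Real.cos_sq (t / 2)
    rwa [show (2:ℝ) * (t / 2) = t by ring] at this
  have hpyth := Real.sin_sq_add_cos_sq (t / 2)
  have key : (Real.cos t - 1) ^ 2 + Real.sin t ^ 2 = 4 * Real.sin (t / 2) ^ 2 := by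
    have h5 := Real.sin_sq_add_cos_sq t
    linear_combination h5 + 4 * hcos - 4 * hpyth
  have hs' : Real.sin (t / 2) ^ 2 ≤ t ^ 2 / 4 := by nlinarith [hs]
  have h4 : ‖Complex.exp ((t : ℂ) * Complex.I) - 1‖ ^ 2 ≤ |t| ^ 2 := by
    rw [h3, sq_abs, key]
    nlinarith [hs']
  have hnn : (0:ℝ) ≤ ‖Complex.exp ((t : ℂ) * Complex.I) - 1‖ := norm_nonneg _
  exact (pow_le_pow_iff_left₀ hnn (abs_nonneg t) two_ne_zero).mp h4

/-- The spectral norm of a diagonal matrix is at most any uniform bound on the entries. -/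
lemma specNorm_diagonal_le {m : Type*} [Fintype m] [DecidableEq m]
    (d : m → ℂ) (C : ℝ) (hC : 0 ≤ C) (h : ∀ i, ‖d i‖ ≤ C) :
    specNorm (Matrix.diagonal d) ≤ C := by
  rw [specNorm]
  refine ContinuousLinearMap.opNorm_le_bound _ hC fun x => ?_
  have hx : (Matrix.toEuclideanCLM (𝕜 := ℂ) (Matrix.diagonal d)) x
      = (WithLp.equiv 2 (m → ℂ)).symm
          ((Matrix.diagonal d) *ᵥ (WithLp.equiv 2 (m → ℂ)) x) := rfl
  rw [hx]
  rw [EuclideanSpace.norm_eq, EuclideanSpace.norm_eq]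
  have hterm : ∀ i : m,
      ‖(WithLp.equiv 2 (m → ℂ)).symm ((Matrix.diagonal d) *ᵥ (WithLp.equiv 2 (m → ℂ)) x) i‖ ^ 2
        ≤ C ^ 2 * ‖x i‖ ^ 2 := by
    intro i
    have hdi : (WithLp.equiv 2 (m → ℂ)).symm
        ((Matrix.diagonal d) *ᵥ (WithLp.equiv 2 (m → ℂ)) x) i = d i * x i := by
      simp [Matrix.mulVec_diagonal]
    rw [hdi, norm_mul, mul_pow]
    have hd2 : ‖d i‖ ^ 2 ≤ C ^ 2 := by nlinarith [h i, norm_nonneg (d i)]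
    exact mul_le_mul_of_nonneg_right hd2 (sq_nonneg _)
  calc Real.sqrt (∑ i, ‖(WithLp.equiv 2 (m → ℂ)).symm
          ((Matrix.diagonal d) *ᵥ (WithLp.equiv 2 (m → ℂ)) x) i‖ ^ 2)
      ≤ Real.sqrt (∑ i, C ^ 2 * ‖x i‖ ^ 2) :=
        Real.sqrt_le_sqrt (Finset.sum_le_sum fun i _ => hterm i)
    _ = C * Real.sqrt (∑ i, ‖x i‖ ^ 2) := by
        rw [← Finset.mul_sum, Real.sqrt_mul (by positivity), Real.sqrt_sq hC]

/-- The truncation error of the Ising evolution is bounded by the total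
truncated time weighted by the interaction strength:
`½‖e^{−iH} − e^{−iH'}‖ ≤ ¼ (Σ_{i≠j} |J_{ij}|) (Σ_{m∈C} λ_m)`, where `H'` is obtained
from `H` by dropping all encodings `m ∈ C`. -/
theorem truncation_error_bound (n : ℕ) (J : Matrix (Fin n) (Fin n) ℝ)
    (hsym : J.IsSymm) (hdiag : ∀ i, J i i = 0)
    (lam : (Fin n → Bool) → ℝ) (hlam : ∀ s, 0 ≤ lam s)
    (C : Finset (Fin n → Bool)) :
    (1 / 2 : ℝ) * specNorm
        (NormedSpace.exp ((-Complex.I) • totalH n J lam Finset.univ) -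
          NormedSpace.exp ((-Complex.I) • totalH n J lam (Finset.univ \ C))) ≤
      (1 / 4 : ℝ) *
        (∑ i : Fin n, ∑ j ∈ Finset.univ.filter (fun j => j ≠ i), |J i j|) *
        (∑ s ∈ C, lam s) := by
  classical
  set ε : (Fin n → Bool) → Fin n → ℝ := fun v i => if v i then (-1 : ℝ) else 1 with hε
  have hεabs : ∀ v i, |ε v i| = 1 := by
    intro v i
    by_cases h : v i <;> simp [hε, h]
  set g : Finset (Fin n → Bool) → (Fin n → Bool) → ℝ := fun S x =>
    -(∑ i : Fin n, ∑ j ∈ Finset.univ.filter (fun j => i < j),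
      J i j * ∑ s ∈ S, lam s * ε s i * ε s j * ε x i * ε x j) with hg
  have hexp : ∀ S : Finset (Fin n → Bool),
      NormedSpace.exp ((-Complex.I) • totalH n J lam S)
        = Matrix.diagonal fun x => Complex.exp (-Complex.I * ((g S x : ℝ) : ℂ)) := by
    intro S
    have h0 : (-Complex.I) • totalH n J lam S
        = Matrix.diagonal fun x => -Complex.I * ((g S x : ℝ) : ℂ) := by
      rw [totalH, ← Matrix.diagonal_smul]
      congr 1
    rw [h0, Matrix.exp_diagonal, Pi.exp_def]
    congr 1
    funext x
    rw [← Complex.exp_eq_exp_ℂ]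
  rw [hexp, hexp, Matrix.diagonal_sub]
  set A : ℝ := ∑ i : Fin n, ∑ j ∈ Finset.univ.filter (fun j => i < j), |J i j| with hA
  set T : ℝ := ∑ s ∈ C, lam s with hT
  have hTnn : 0 ≤ T := Finset.sum_nonneg fun s _ => hlam s
  have hAnn : 0 ≤ A := Finset.sum_nonneg fun i _ =>
    Finset.sum_nonneg fun j _ => abs_nonneg _
  -- entrywise bound
  have hentry : ∀ x : Fin n → Bool,
      ‖Complex.exp (-Complex.I * ((g Finset.univ x : ℝ) : ℂ))
        - Complex.exp (-Complex.I * ((g (Finset.univ \ C) x : ℝ) : ℂ))‖ ≤ A * T := by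
    intro x
    have hrw : ∀ c : ℝ, -Complex.I * ((c : ℝ) : ℂ) = ((-c : ℝ) : ℂ) * Complex.I := by
      intro c; push_cast; ring
    rw [hrw, hrw]
    refine le_trans (norm_exp_I_sub_exp_I_le _ _) ?_
    have hdiff : -g Finset.univ x - -g (Finset.univ \ C) x
        = ∑ i : Fin n, ∑ j ∈ Finset.univ.filter (fun j => i < j),
            J i j * ∑ s ∈ C, lam s * ε s i * ε s j * ε x i * ε x j := by
      simp only [hg, neg_neg]
      rw [← Finset.sum_sub_distrib]
      refine Finset.sum_congr rfl fun i _ => ?_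
      rw [← Finset.sum_sub_distrib]
      refine Finset.sum_congr rfl fun j _ => ?_
      rw [← mul_sub]
      congr 1
      rw [← Finset.sum_sdiff (Finset.subset_univ C)
        (f := fun s => lam s * ε s i * ε s j * ε x i * ε x j)]
      ring
    rw [hdiff]
    refine le_trans (Finset.abs_sum_le_sum_abs _ _) ?_
    rw [hA, Finset.sum_mul]
    refine Finset.sum_le_sum fun i _ => ?_
    refine le_trans (Finset.abs_sum_le_sum_abs _ _) ?_
    rw [Finset.sum_mul]
    refine Finset.sum_le_sum fun j _ => ?_
    rw [abs_mul]
    refine mul_le_mul_of_nonneg_left ?_ (abs_nonneg _)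
    refine le_trans (Finset.abs_sum_le_sum_abs _ _) ?_
    rw [hT]
    refine Finset.sum_le_sum fun s _ => ?_
    rw [abs_mul, abs_mul, abs_mul, abs_mul, hεabs, hεabs, hεabs, hεabs,
      abs_of_nonneg (hlam s)]
    ring_nf
    exact le_refl _
  have hbound : specNorm (Matrix.diagonal fun x =>
      Complex.exp (-Complex.I * ((g Finset.univ x : ℝ) : ℂ)) -
        Complex.exp (-Complex.I * ((g (Finset.univ \ C) x : ℝ) : ℂ))) ≤ A * T :=
    specNorm_diagonal_le _ _ (mul_nonneg hAnn hTnn) fun x => hentry x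
  -- the off-diagonal sum is twice the strict upper-triangular sum
  have hsplit : ∑ i : Fin n, ∑ j ∈ Finset.univ.filter (fun j => j ≠ i), |J i j|
      = 2 * A := by
    have h1 : ∀ i : Fin n, (Finset.univ.filter (fun j => j ≠ i))
        = (Finset.univ.filter (fun j => i < j)) ∪ (Finset.univ.filter (fun j => j < i)) := by
      intro i
      ext j
      simp [← lt_or_lt_iff_ne, or_comm, ne_comm]
    have h2 : ∑ i : Fin n, ∑ j ∈ Finset.univ.filter (fun j => j < i), |J i j| = A := by
      calc ∑ i : Fin n, ∑ j ∈ Finset.univ.filter (fun j => j < i), |J i j|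
          = ∑ i : Fin n, ∑ j : Fin n, if j < i then |J i j| else 0 := by
            simp [Finset.sum_filter]
        _ = ∑ j : Fin n, ∑ i : Fin n, if j < i then |J i j| else 0 := Finset.sum_comm
        _ = ∑ i : Fin n, ∑ j : Fin n, if i < j then |J j i| else 0 := rfl
        _ = A := by
            rw [hA]
            simp only [Finset.sum_filter]
            refine Finset.sum_congr rfl fun i _ => Finset.sum_congr rfl fun j _ => ?_
            rw [hsym.apply i j]
    calc ∑ i : Fin n, ∑ j ∈ Finset.univ.filter (fun j => j ≠ i), |J i j|
        = ∑ i : Fin n, (∑ j ∈ Finset.univ.filter (fun j => i < j), |J i j|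
            + ∑ j ∈ Finset.univ.filter (fun j => j < i), |J i j|) := by
          refine Finset.sum_congr rfl fun i _ => ?_
          rw [h1 i, Finset.sum_union]
          rw [Finset.disjoint_left]
          intro j hj hj'
          simp only [Finset.mem_filter, Finset.mem_univ, true_and] at hj hj'
          exact absurd hj' (not_lt_of_gt hj)
      _ = A + A := by rw [Finset.sum_add_distrib, ← hA, h2]
      _ = 2 * A := by ring
  rw [hsplit]
  nlinarith [hbound]
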